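/- For every k >= 1, A_{2k} >= k^2 * C(2k-2, k-1) * A_k^2, where A_n is the number of labeled DAGs on n vertices. -/

import Mathlib

open Filter Finset

/-- A directed graph (given by its edge relation) is acyclic iff no vertex lies on a
directed cycle, i.e. the transitive closure is irreflexive. -/
def DigraphAcyclic {V : Type*} (g : V → V → Prop) : Prop :=
  ∀ a, ¬ Relation.TransGen g a a

/-- The number of labeled DAGs on `n` vertices. -/
noncomputable def dagCount (n : ℕ) : ℕ :=
  Nat.card {g : Fin n → Fin n → Bool // DigraphAcyclic fun x y => g x y = true}

/-- The number of connected labeled DAGs on `n` vertices (connected means the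
underlying undirected graph is connected). -/
noncomputable def connDagCount (n : ℕ) : ℕ :=
  Nat.card {g : Fin n → Fin n → Bool //
    (DigraphAcyclic fun x y => g x y = true) ∧
    ∀ a b : Fin n, Relation.ReflTransGen (fun x y => g x y = true ∨ g y x = true) a b}

/-- Glue two digraphs on `Fin k` into one on `Fin (2*k)`, adding the cross edges
described by the matrix `m` (all oriented left-to-right). -/
def glueDag (k : ℕ) (m g g' : Fin k → Fin k → Bool) :
    Fin (2 * k) → Fin (2 * k) → Bool := fun i j =>
  if hi : (i : ℕ) < k then
    if hj : (j : ℕ) < k then g ⟨i, hi⟩ ⟨j, hj⟩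
    else m ⟨i, hi⟩ ⟨(j : ℕ) - k, by have := j.isLt; omega⟩
  else
    if hj : (j : ℕ) < k then false
    else g' ⟨(i : ℕ) - k, by have := i.isLt; omega⟩ ⟨(j : ℕ) - k, by have := j.isLt; omega⟩

lemma glueDag_step {k : ℕ} {m g g' : Fin k → Fin k → Bool} {x y : Fin (2 * k)}
    (h : glueDag k m g g' x y = true) :
    (∃ (hx : (x : ℕ) < k) (hy : (y : ℕ) < k), g ⟨x, hx⟩ ⟨y, hy⟩ = true) ∨
    ((x : ℕ) < k ∧ k ≤ (y : ℕ)) ∨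
    (∃ (hx : k ≤ (x : ℕ)) (hy : k ≤ (y : ℕ)),
      g' ⟨(x : ℕ) - k, by have := x.isLt; omega⟩ ⟨(y : ℕ) - k, by have := y.isLt; omega⟩ = true) := by
  unfold glueDag at h
  by_cases hx : (x : ℕ) < k
  · by_cases hy : (y : ℕ) < k
    · exact Or.inl ⟨hx, hy, by simpa [hx, hy] using h⟩
    · exact Or.inr (Or.inl ⟨hx, by omega⟩)
  · by_cases hy : (y : ℕ) < k
    · simp [hx, hy] at h
    · exact Or.inr (Or.inr ⟨by omega, by omega, by simpa [hx, hy] using h⟩)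

lemma glueDag_acyclic {k : ℕ} {m g g' : Fin k → Fin k → Bool}
    (hg : DigraphAcyclic fun x y => g x y = true)
    (hg' : DigraphAcyclic fun x y => g' x y = true) :
    DigraphAcyclic fun x y => glueDag k m g g' x y = true := by
  have key : ∀ a b : Fin (2 * k),
      Relation.TransGen (fun x y => glueDag k m g g' x y = true) a b →
      ((∀ (ha : k ≤ (a : ℕ)), ∃ hb : k ≤ (b : ℕ),
        Relation.TransGen (fun x y => g' x y = true)
          ⟨(a : ℕ) - k, by have := a.isLt; omega⟩ ⟨(b : ℕ) - k, by have := b.isLt; omega⟩) ∧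
       (∀ (ha : (a : ℕ) < k) (hb : (b : ℕ) < k),
        Relation.TransGen (fun x y => g x y = true) ⟨a, ha⟩ ⟨b, hb⟩)) := by
    intro a b hab
    induction hab with
    | single h =>
      rcases glueDag_step h with ⟨hx, hy, hgxy⟩ | ⟨hx, hy⟩ | ⟨hx, hy, hgxy⟩
      · exact ⟨fun ha => absurd hx (by omega), fun ha hb => Relation.TransGen.single hgxy⟩
      · exact ⟨fun ha => absurd hx (by omega), fun ha hb => absurd hb (by omega)⟩
      · exact ⟨fun ha => ⟨hy, Relation.TransGen.single hgxy⟩, fun ha hb => absurd ha (by omega)⟩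
    | tail hac hcb ih =>
      rename_i c b'
      constructor
      · intro ha
        obtain ⟨hc, hpath⟩ := ih.1 ha
        rcases glueDag_step hcb with ⟨hx, hy, hgxy⟩ | ⟨hx, hy⟩ | ⟨hx, hy, hgxy⟩
        · exact absurd hx (by omega)
        · exact absurd hx (by omega)
        · exact ⟨hy, hpath.tail hgxy⟩
      · intro ha hb
        have hc : (c : ℕ) < k := by
          rcases glueDag_step hcb with ⟨hx, _, _⟩ | ⟨hx, _⟩ | ⟨hx, hy, _⟩
          · exact hx
          · exact hx
          · omega
        rcases glueDag_step hcb with ⟨hx, hy, hgxy⟩ | ⟨hx, hy⟩ | ⟨hx, hy, hgxy⟩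
        · exact (ih.2 ha hc).tail hgxy
        · omega
        · omega
  intro a hcyc
  by_cases ha : (a : ℕ) < k
  · exact hg ⟨a, ha⟩ ((key a a hcyc).2 ha ha)
  · obtain ⟨_, hpath⟩ := (key a a hcyc).1 (by omega)
    exact hg' _ hpath

lemma glueDag_inj {k : ℕ} {m₁ m₂ g₁ g₂ g₁' g₂' : Fin k → Fin k → Bool}
    (h : glueDag k m₁ g₁ g₁' = glueDag k m₂ g₂ g₂') : m₁ = m₂ ∧ g₁ = g₂ ∧ g₁' = g₂' := by
  have hk2 : ∀ i : Fin k, (i : ℕ) < 2 * k := fun i => by have := i.isLt; omega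
  have hk3 : ∀ i : Fin k, k + (i : ℕ) < 2 * k := fun i => by have := i.isLt; omega
  refine ⟨?_, ?_, ?_⟩ <;> funext i j
  · have := congrFun (congrFun h ⟨i, hk2 i⟩) ⟨k + j, hk3 j⟩
    simpa [glueDag, i.isLt, Nat.not_lt.mpr (Nat.le_add_right k j)] using this
  · have := congrFun (congrFun h ⟨i, hk2 i⟩) ⟨j, hk2 j⟩
    simpa [glueDag, i.isLt, j.isLt] using this
  · have := congrFun (congrFun h ⟨k + i, hk3 i⟩) ⟨k + j, hk3 j⟩
    simpa [glueDag, Nat.not_lt.mpr (Nat.le_add_right k i),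
      Nat.not_lt.mpr (Nat.le_add_right k j)] using this

lemma count_le_two_pow (k : ℕ) : k * k * (2 * k - 2).choose (k - 1) ≤ 2 ^ (k * k) := by
  have h1 : (2 * k - 2).choose (k - 1) ≤ 2 ^ (2 * k - 2) := by
    rcases le_or_gt (k - 1) (2 * k - 2) with h | h
    · calc (2 * k - 2).choose (k - 1)
          ≤ ∑ i ∈ range (2 * k - 2 + 1), (2 * k - 2).choose i :=
            Finset.single_le_sum (fun i _ => Nat.zero_le _)
              (by simp [Nat.lt_succ_iff]; omega)
        _ = 2 ^ (2 * k - 2) := Nat.sum_range_choose _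
    · simp [Nat.choose_eq_zero_of_lt h]
  have hkle : k ≤ 2 ^ (k - 1) := by
    have := Nat.lt_two_pow_self (n := k - 1); omega
  have hexp' : (k - 1) + (k - 1) ≤ k * k - (2 * k - 2) := by
    obtain _ | m := k
    · simp
    · have e1 : 2 * (m + 1) - 2 = 2 * m := by omega
      have e2 : (m + 1) * (m + 1) = m * m + 1 + 2 * m := by ring
      simp only [Nat.add_sub_cancel, e1, e2]
      obtain _ | n := m
      · simp
      · nlinarith
  have h2 : k * k ≤ 2 ^ (k * k - (2 * k - 2)) :=
    calc k * k ≤ 2 ^ (k - 1) * 2 ^ (k - 1) := Nat.mul_le_mul hkle hkle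
      _ = 2 ^ ((k - 1) + (k - 1)) := (pow_add 2 _ _).symm
      _ ≤ 2 ^ (k * k - (2 * k - 2)) := Nat.pow_le_pow_right (by norm_num) hexp'
  have h3 : 2 * k - 2 ≤ k * k := by
    obtain _ | m := k
    · simp
    · have e1 : 2 * (m + 1) - 2 = 2 * m := by omega
      rw [e1]
      nlinarith
  calc k * k * (2 * k - 2).choose (k - 1)
      ≤ 2 ^ (k * k - (2 * k - 2)) * 2 ^ (2 * k - 2) := Nat.mul_le_mul h2 h1
    _ = 2 ^ (k * k - (2 * k - 2) + (2 * k - 2)) := (pow_add 2 _ _).symm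
    _ = 2 ^ (k * k) := by rw [Nat.sub_add_cancel h3]

theorem dagCount_two_mul_ge (k : ℕ) (hk : 1 ≤ k) :
    k ^ 2 * (2 * k - 2).choose (k - 1) * dagCount k ^ 2 ≤ dagCount (2 * k) := by
  classical
  obtain ⟨e⟩ : Nonempty ((Fin k × Fin k × {s : Finset (Fin (2 * k - 2)) // s.card = k - 1}) ↪
      (Fin k → Fin k → Bool)) := by
    apply Function.Embedding.nonempty_of_card_le
    simp only [Fintype.card_prod, Fintype.card_fin, Fintype.card_finset_len,
      Fintype.card_fun, Fintype.card_bool, ← pow_mul]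
    calc k * (k * (2 * k - 2).choose (k - 1)) = k * k * (2 * k - 2).choose (k - 1) := by ring
      _ ≤ 2 ^ (k * k) := count_le_two_pow k
  set F : (Fin k × Fin k × {s : Finset (Fin (2 * k - 2)) // s.card = k - 1}) ×
      {g : Fin k → Fin k → Bool // DigraphAcyclic fun x y => g x y = true} ×
      {g : Fin k → Fin k → Bool // DigraphAcyclic fun x y => g x y = true} →
      {g : Fin (2 * k) → Fin (2 * k) → Bool // DigraphAcyclic fun x y => g x y = true} :=
    fun p => ⟨glueDag k (e p.1) p.2.1.1 p.2.2.1, glueDag_acyclic p.2.1.2 p.2.2.2⟩ with hFdef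
  have hFinj : Function.Injective F := by
    rintro ⟨a₁, ⟨g₁, hg₁⟩, ⟨g₁', hg₁'⟩⟩ ⟨a₂, ⟨g₂, hg₂⟩, ⟨g₂', hg₂'⟩⟩ hEq
    obtain ⟨hm, hg, hg'⟩ := glueDag_inj (congrArg Subtype.val hEq)
    have := e.injective hm
    simp_all
  have hle := Nat.card_le_card_of_injective F hFinj
  rw [Nat.card_prod, Nat.card_prod, Nat.card_prod, Nat.card_prod] at hle
  have hA : Nat.card (Fin k) = k := by simp
  have hB : Nat.card {s : Finset (Fin (2 * k - 2)) // s.card = k - 1}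
      = (2 * k - 2).choose (k - 1) := by
    rw [Nat.card_eq_fintype_card, Fintype.card_finset_len, Fintype.card_fin]
  rw [hA, hB] at hle
  calc k ^ 2 * (2 * k - 2).choose (k - 1) * dagCount k ^ 2
      = k * (k * (2 * k - 2).choose (k - 1)) *
        (Nat.card {g : Fin k → Fin k → Bool // DigraphAcyclic fun x y => g x y = true} *
         Nat.card {g : Fin k → Fin k → Bool // DigraphAcyclic fun x y => g x y = true}) := by
        unfold dagCount; ring
    _ ≤ dagCount (2 * k) := hle
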